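/- arXiv:2604.11049 — 2 statements merged into one kernel-verified Lean document; each statement's English description precedes it below -/
import Mathlib

section
/- Let (S, ≥) be a finite partially ordered set, and let ι₁, ι₂ : S → S be two involutions (ι₁ ∘ ι₁ = id and ι₂ ∘ ι₂ = id) such that ι₁(s) ≥ ι₂(s) for every s ∈ S. Then ι₁ = ι₂. -/
/-- Lemma on involutions on finite posets: if two involutions `ι₁, ι₂` on a finite
partially ordered set satisfy `ι₁ s ≥ ι₂ s` for all `s`, then they are equal. -/
theorem stmt0 {S : Type*} [Fintype S] [PartialOrder S]
    (ι₁ ι₂ : S → S)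
    (h1 : ∀ s, ι₁ (ι₁ s) = s) (h2 : ∀ s, ι₂ (ι₂ s) = s)
    (h : ∀ s, ι₁ s ≥ ι₂ s) : ι₁ = ι₂ := by
  set f : S → S := fun s => ι₂ (ι₁ s) with hfdef
  have hle : ∀ s, f s ≤ s := fun s => by
    have := h (ι₁ s); rw [h1 s] at this; exact this
  have hinj : Function.Injective f := by
    intro a b hab
    have : ι₁ (ι₂ (f a)) = ι₁ (ι₂ (f b)) := by rw [hab]
    simpa [hfdef, h2, h1] using this
  -- every iterate from k ≥ 1 is ≤ f t
  have hiter : ∀ (t : S) (k : ℕ), f^[k + 1] t ≤ f t := by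
    intro t k
    induction k with
    | zero => simp
    | succ n ih =>
      calc f^[n + 2] t = f (f^[n+1] t) := by
            rw [Function.iterate_succ_apply']
        _ ≤ f^[n+1] t := hle _
        _ ≤ f t := ih
  -- f is the identity
  have hid : ∀ t, f t = t := by
    intro t
    obtain ⟨i, j, hij, heq⟩ : ∃ i j, i < j ∧ f^[i] t = f^[j] t := by
      obtain ⟨i, j, hne, heq⟩ := Finite.exists_ne_map_eq_of_infinite (fun n : ℕ => f^[n] t)
      rcases hne.lt_or_gt with hlt | hlt
      · exact ⟨i, j, hlt, heq⟩
      · exact ⟨j, i, hlt, heq.symm⟩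
    have hcancel : f^[j - i] t = t := by
      have : f^[i] (f^[j - i] t) = f^[i] t := by
        rw [← Function.iterate_add_apply, Nat.add_sub_cancel' hij.le, heq]
      exact hinj.iterate i this
    have hpos : 1 ≤ j - i := by omega
    have : t ≤ f t := by
      calc t = f^[(j - i - 1) + 1] t := by
            rw [show j - i - 1 + 1 = j - i by omega, hcancel]
        _ ≤ f t := hiter t _
    exact le_antisymm (hle t) this
  funext s
  have : ι₂ (f s) = ι₂ s := by rw [hid s]
  simpa [hfdef, h2] using this
end

section
/- Let (S, ≥) be a finite partially ordered set and ι₁, ι₂ : S → S two involutions with ι₁(s) ≥ ι₂(s) for all s. If s is a minimal element of the set S' = {s ∈ S | ι₁(s) ≠ ι₂(s)} (assumed nonempty), then ι₂(ι₁(s)) ∉ S', i.e. ι₁(ι₂(ι₁(s))) = ι₂(ι₂(ι₁(s))). -/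
/-- If `s` is a minimal element of the set where two involutions `ι₁ ≥ ι₂` disagree,
then `ι₂ (ι₁ s)` is not in that set. -/
theorem stmt1 {S : Type*} [Fintype S] [PartialOrder S]
    (ι₁ ι₂ : S → S)
    (h1 : ∀ s, ι₁ (ι₁ s) = s) (h2 : ∀ s, ι₂ (ι₂ s) = s)
    (h : ∀ s, ι₁ s ≥ ι₂ s)
    (s : S) (hs : ι₁ s ≠ ι₂ s)
    (hmin : ∀ t, ι₁ t ≠ ι₂ t → t ≤ s → t = s) :
    ι₁ (ι₂ (ι₁ s)) = ι₂ (ι₂ (ι₁ s)) := by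
  by_contra hne
  have hle : ι₂ (ι₁ s) ≤ s := by
    have := h (ι₁ s)
    rwa [h1 s] at this
  have heq := hmin _ hne hle
  apply hs
  have : ι₂ (ι₂ (ι₁ s)) = ι₂ s := congrArg ι₂ heq
  rw [h2] at this
  exact this.symm ▸ rfl
end
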